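/- Under r-g < λ < r-g+α/κ and θ₁ > 1, θ₂ < 0, fix a > 0 with a > m. Then ∂G/∂a(a, b) = ((θ₁-1)(1-θ₂)(κ(λ-(r-g))-α)/((θ₁-θ₂)(λ-(r-g))a))·[(b/a)^{1-θ₁} - (b/a)^{1-θ₂}] > 0 for every b > a. -/

import Mathlib

open Real

noncomputable def G (r g lam α κ m θ₁ θ₂ a b : ℝ) : ℝ :=
  ((θ₁ - 1) * (b / a) ^ (1 - θ₂) + (1 - θ₂) * (b / a) ^ (1 - θ₁)) *
    (κ / (θ₁ - θ₂) - (if m ≤ b then α else 0) / ((θ₁ - θ₂) * (lam - (r - g))))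
  + (α / ((θ₁ - θ₂) * (lam - (r - g)))) *
      ((1 - θ₂) * (m / a) ^ (1 - θ₁) + (θ₁ - 1) * (m / a) ^ (1 - θ₂)) *
      (if a < m ∧ m < b then 1 else 0)
  + (α / (lam - (r - g))) * (if m ≤ a then 1 else 0)

/-- for a > m, the partial derivative ∂G/∂a(a,b) equals
((θ₁-1)(1-θ₂)(κ(λ-(r-g))-α)/((θ₁-θ₂)(λ-(r-g))a))·[(b/a)^{1-θ₁} - (b/a)^{1-θ₂}]
and is strictly positive for every b > a. -/
theorem stmt_17 (σ r g lam α κ m θ₁ θ₂ a : ℝ) (hσ : 0 < σ)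
    (hα : 0 < α) (hκ : 0 < κ) (hm : 0 < m)
    (hlam₁ : r - g < lam) (hlam₂ : lam < r - g + α / κ)
    (hθ₁ : θ₁ > 1) (hθ₂ : θ₂ < 0)
    (hroot₁ : (1/2) * σ ^ 2 * θ₁ * (θ₁ - 1) + (r - g) * θ₁ - lam = 0)
    (hroot₂ : (1/2) * σ ^ 2 * θ₂ * (θ₂ - 1) + (r - g) * θ₂ - lam = 0)
    (ha : m < a) :
    ∀ b, a < b →
      HasDerivAt (fun a' => G r g lam α κ m θ₁ θ₂ a' b)
        ((θ₁ - 1) * (1 - θ₂) * (κ * (lam - (r - g)) - α)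
            / ((θ₁ - θ₂) * (lam - (r - g)) * a) *
          ((b / a) ^ (1 - θ₁) - (b / a) ^ (1 - θ₂))) a ∧
      0 < (θ₁ - 1) * (1 - θ₂) * (κ * (lam - (r - g)) - α)
            / ((θ₁ - θ₂) * (lam - (r - g)) * a) *
          ((b / a) ^ (1 - θ₁) - (b / a) ^ (1 - θ₂)) := by
  have ha0 : 0 < a := hm.trans ha
  have hlam : 0 < lam - (r - g) := by linarith
  have hθd : 0 < θ₁ - θ₂ := by linarith
  have hκα : κ * (lam - (r - g)) - α < 0 := by
    have h1 : lam - (r - g) < α / κ := by linarith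
    have := (lt_div_iff₀ hκ).mp h1
    nlinarith
  intro b hb
  have hb0 : 0 < b := ha0.trans hb
  have hba : 1 < b / a := (one_lt_div ha0).mpr hb
  have hba0 : 0 < b / a := by positivity
  have hmb : m ≤ b := (ha.trans hb).le
  set C := κ / (θ₁ - θ₂) - α / ((θ₁ - θ₂) * (lam - (r - g))) with hC
  -- derivative of x ↦ (b/x)^p at a
  have key : ∀ p : ℝ, HasDerivAt (fun x => (b / x) ^ p) (-p * (b / a) ^ p / a) a := by
    intro p
    have h1 : HasDerivAt (fun x : ℝ => b / x) (b * (-(a ^ 2)⁻¹)) a := by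
      simpa [div_eq_mul_inv] using (hasDerivAt_inv (ne_of_gt ha0)).const_mul b
    have h2 := h1.rpow_const (p := p) (Or.inl (by positivity))
    convert h2 using 1
    have h3 : (b / a) ^ (p - 1) = (b / a) ^ p / (b / a) := by
      rw [rpow_sub hba0, rpow_one]
    rw [h3]
    field_simp
  have hF : HasDerivAt
      (fun x => ((θ₁ - 1) * (b / x) ^ (1 - θ₂) + (1 - θ₂) * (b / x) ^ (1 - θ₁)) * C
        + α / (lam - (r - g)))
      (((θ₁ - 1) * (-(1 - θ₂) * (b / a) ^ (1 - θ₂) / a)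
        + (1 - θ₂) * (-(1 - θ₁) * (b / a) ^ (1 - θ₁) / a)) * C) a := by
    exact ((((key (1 - θ₂)).const_mul (θ₁ - 1)).add
      ((key (1 - θ₁)).const_mul (1 - θ₂))).mul_const C).add_const _
  have hev : (fun x => ((θ₁ - 1) * (b / x) ^ (1 - θ₂) + (1 - θ₂) * (b / x) ^ (1 - θ₁)) * C
        + α / (lam - (r - g)))
      =ᶠ[nhds a] (fun a' => G r g lam α κ m θ₁ θ₂ a' b) := by
    filter_upwards [eventually_gt_nhds ha] with x hx
    have h1 : ¬(x < m ∧ m < b) := fun h => absurd h.1 (not_lt.mpr hx.le)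
    simp [G, hmb, h1, hx.le, hC]
  have hder := hF.congr_of_eventuallyEq hev.symm
  set X := (b / a) ^ (1 - θ₁) with hX
  set Y := (b / a) ^ (1 - θ₂) with hY
  have hXY : X < Y := by
    have hX1 : X < 1 := rpow_lt_one_of_one_lt_of_neg hba (by linarith)
    have hY1 : 1 < Y := one_lt_rpow_iff_of_pos hba0 |>.mpr (Or.inl ⟨hba, by linarith⟩)
    linarith
  constructor
  · refine hder.congr_deriv ?_
    rw [hC]
    field_simp
    ring
  · apply mul_pos_of_neg_of_neg
    · apply div_neg_of_neg_of_pos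
      · exact mul_neg_of_pos_of_neg (mul_pos (by linarith) (by linarith)) hκα
      · positivity
    · linarith
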